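/- Let v=(v₁,v₂)∈ℤ². For every (x,y)∈(ℂ*)² with 1+x^{v₂}y^{−v₁}≠0, the point μ_v(x,y) lies in the domain of μ_{−v} (indeed 1+X^{−v₂}Y^{v₁}=x^{−v₂}y^{v₁}(1+x^{v₂}y^{−v₁})≠0 at (X,Y)=μ_v(x,y)), and the composition satisfies μ_{−v}(μ_v(x,y)) = (x^{1−v₁v₂}·y^{v₁²}, x^{−v₂²}·y^{1+v₁v₂}). In particular, the twice-repeated mutation acts on (ℂ*)² as the monomial automorphism given by the matrix B=(1−v₁v₂, v₁²; −v₂², 1+v₁v₂)∈SL(2,ℤ). -/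

import Mathlib

/-- The wall-crossing map `μ_v : (ℂ*)² ⇢ (ℂ*)²` associated to `v ∈ ℤ²`. -/
noncomputable def muMap (v : ℤ × ℤ) (x y : ℂ) : ℂ × ℂ :=
  (x * (1 + x ^ v.2 * y ^ (-v.1)) ^ (-v.1),
   y * (1 + x ^ v.2 * y ^ (-v.1)) ^ (-v.2))

/-- The point `μ_v(x,y)` lies in the domain of `μ_{-v}`, and the composition
`μ_{-v} ∘ μ_v` is the monomial automorphism given by the matrix
`(1 - v₁v₂, v₁²; -v₂², 1 + v₁v₂) ∈ SL(2,ℤ)`. -/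
theorem mu_neg_comp_mu (v : ℤ × ℤ) (x y : ℂ) (hx : x ≠ 0) (hy : y ≠ 0)
    (h : 1 + x ^ v.2 * y ^ (-v.1) ≠ 0) :
    (1 + (muMap v x y).1 ^ (-v.2) * (muMap v x y).2 ^ v.1
        = x ^ (-v.2) * y ^ v.1 * (1 + x ^ v.2 * y ^ (-v.1))) ∧
    (1 + (muMap v x y).1 ^ (-v.2) * (muMap v x y).2 ^ v.1 ≠ 0) ∧
    muMap (-v) (muMap v x y).1 (muMap v x y).2
      = (x ^ (1 - v.1 * v.2) * y ^ (v.1 ^ 2), x ^ (-v.2 ^ 2) * y ^ (1 + v.1 * v.2)) := by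
  obtain ⟨a, b⟩ := v
  simp only [muMap, Prod.fst, Prod.snd, Prod.neg_mk, neg_neg] at *
  set u : ℂ := 1 + x ^ b * y ^ (-a) with hu
  have hxb : x ^ b ≠ 0 := zpow_ne_zero _ hx
  have hya : y ^ a ≠ 0 := zpow_ne_zero _ hy
  have key : (x * u ^ (-a)) ^ (-b) * (y * u ^ (-b)) ^ a = x ^ (-b) * y ^ a := by
    rw [mul_zpow, mul_zpow, ← zpow_mul, ← zpow_mul,
      show (-a) * (-b) = a * b by ring, show (-b) * a = -(a * b) by ring, zpow_neg u]
    have h2 : u ^ (a * b) ≠ 0 := zpow_ne_zero _ h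
    field_simp
  have eq1 : 1 + x ^ (-b) * y ^ a = x ^ (-b) * y ^ a * u := by
    rw [hu, zpow_neg x, zpow_neg y]
    field_simp
    ring
  refine ⟨by rw [key, eq1], ?_, ?_⟩
  · rw [key, eq1]
    exact mul_ne_zero (mul_ne_zero (zpow_ne_zero _ hx) (zpow_ne_zero _ hy)) h
  · rw [key, eq1, Prod.ext_iff]
    constructor
    · show x * u ^ (-a) * (x ^ (-b) * y ^ a * u) ^ a = _
      rw [mul_zpow, mul_zpow, ← zpow_mul, ← zpow_mul, zpow_sub₀ hx, zpow_one,
        show (-b) * a = -(a * b) by ring, show a * a = a ^ 2 by ring, zpow_neg x, zpow_neg u]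
      have h1 : x ^ (a * b) ≠ 0 := zpow_ne_zero _ hx
      have h2 : u ^ a ≠ 0 := zpow_ne_zero _ h
      field_simp
    · show y * u ^ (-b) * (x ^ (-b) * y ^ a * u) ^ b = _
      rw [mul_zpow, mul_zpow, ← zpow_mul, ← zpow_mul,
        show (-b) * b = -b ^ 2 by ring, zpow_add₀ hy, zpow_one, zpow_neg u]
      have h2 : u ^ b ≠ 0 := zpow_ne_zero _ h
      field_simp
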